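/- Let k ≥ 2 be a prime number. In the polynomial ring (ZMod k)[X], one has ∑_{i=1}^{k−1} i·X^{i−1} = −(X − 1)^{k−2}. -/

import Mathlib

open Polynomial in
theorem stmt_4 (k : ℕ) (hk : Nat.Prime k) (hk2 : 2 ≤ k) :
    (∑ i ∈ Finset.Icc 1 (k - 1), (i : (ZMod k)[X]) * X ^ (i - 1)) =
      -(X - 1) ^ (k - 2) := by
  haveI : Fact (Nat.Prime k) := ⟨hk⟩
  have hk1 : 1 ≤ k := le_trans one_le_two hk2
  have hgeom : (∑ i ∈ Finset.range k, (X : (ZMod k)[X]) ^ i) = (X - 1) ^ (k - 1) := by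
    have hreg : IsRegular ((X : (ZMod k)[X]) - 1) :=
      (monic_X_sub_C (1 : ZMod k)).isRegular
    refine hreg.left ?_
    dsimp only
    rw [mul_geom_sum, ← pow_succ', Nat.sub_add_cancel hk1]
    rw [sub_pow_char (p := k), one_pow]
  have hd := congrArg Polynomial.derivative hgeom
  rw [derivative_sum] at hd
  have hL : (∑ i ∈ Finset.range k, Polynomial.derivative ((X : (ZMod k)[X]) ^ i)) =
      ∑ i ∈ Finset.Icc 1 (k - 1), (i : (ZMod k)[X]) * X ^ (i - 1) := by
    rw [show Finset.Icc 1 (k-1) = Finset.Ico 1 k by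
      rw [← Finset.Ico_succ_right_eq_Icc, Order.succ_eq_add_one, Nat.sub_add_cancel hk1]]
    rw [Finset.range_eq_Ico, Finset.sum_eq_sum_Ico_succ_bot hk1]
    simp only [derivative_X_pow]
    simp [Polynomial.C_eq_natCast]
  rw [hL] at hd
  rw [hd]
  rw [derivative_pow, derivative_sub, derivative_X, derivative_one, sub_zero, mul_one]
  rw [show k - 1 - 1 = k - 2 from by omega]
  rw [show ((k - 1 : ℕ) : ZMod k) = -1 from by
    rw [Nat.cast_sub hk1]; simp]
  simp
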